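/- A process $\theta$ is a lazy clock if and only if there exists a càdlàg process $A$ such that the set $\mathcal{Z}:=\{s: A_{s^-}=0 \text{ or } A_s=0\}$ has almost surely zero Lebesgue measure and $\theta_t = g_t := \sup\{s\leq t: A_{s^-}=0 \text{ or } A_s=0\}$. -/

import Mathlib

open MeasureTheory Function Set Filter Topology

/-- A lazy clock sample path on `[0,∞)`: grounded, nondecreasing, right-continuous,
piecewise constant (equal to the sum of its jumps), and synchronizing to calendar time
at every jump. -/
def IsLazyClockPath (f : ℝ → ℝ) : Prop :=
  f 0 = 0 ∧
  (∀ s t : ℝ, 0 ≤ s → s ≤ t → f s ≤ f t) ∧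
  (∀ t : ℝ, 0 ≤ t → ContinuousWithinAt f (Set.Ici t) t) ∧
  (∀ t : ℝ, 0 ≤ t → f t = ∑' s : Set.Ioc (0 : ℝ) t, (f s - Function.leftLim f s)) ∧
  (∀ s : ℝ, 0 < s → f s ≠ Function.leftLim f s → f s = s)

/-- A lazy clock: a measurable process whose sample paths are a.s. lazy clock paths. -/
def IsLazyClock {Ω : Type*} [MeasurableSpace Ω] (μ : Measure Ω) (θ : ℝ → Ω → ℝ) : Prop :=
  (∀ t, Measurable (θ t)) ∧ ∀ᵐ ω ∂μ, IsLazyClockPath (fun t => θ t ω)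

/-- A càdlàg path on `[0,∞)`: right-continuous with left limits. -/
def IsCadlagPath (f : ℝ → ℝ) : Prop :=
  (∀ t : ℝ, 0 ≤ t → ContinuousWithinAt f (Set.Ici t) t) ∧
  (∀ t : ℝ, 0 < t → ∃ l : ℝ, Filter.Tendsto f (nhdsWithin t (Set.Iio t)) (nhds l))

namespace LazyAux

/-- The zero set of a path, including left-limit zeros. -/
def zeroSet (A : ℝ → ℝ) : Set ℝ := {s : ℝ | 0 ≤ s ∧ (leftLim A s = 0 ∨ A s = 0)}

/-- Last passage at the zero set before time `t`. -/
noncomputable def lastZero (A : ℝ → ℝ) (t : ℝ) : ℝ := sSup (zeroSet A ∩ Iic t)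

lemma zero_approx {A : ℝ → ℝ} (hc : IsCadlagPath A) {s : ℝ} (hs : 0 < s)
    (hZ : leftLim A s = 0 ∨ A s = 0) {ε δ : ℝ} (hε : 0 < ε) (hδ : 0 < δ) :
    ∃ v, s - δ < v ∧ v ≤ s ∧ |A v| ≤ ε := by
  rcases hZ with h | h
  · obtain ⟨l, hl⟩ := hc.2 s hs
    have hne : (𝓝[<] s).NeBot := inferInstance
    have hll : leftLim A s = l := leftLim_eq_of_tendsto hl
    rw [hll] at h; subst h
    have h1 : A ⁻¹' Metric.closedBall 0 ε ∈ 𝓝[<] s := hl (Metric.closedBall_mem_nhds _ hε)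
    have h2 : Ioo (s - δ) s ∈ 𝓝[<] s := Ioo_mem_nhdsLT_of_mem ⟨by linarith, le_rfl⟩
    obtain ⟨v, hv1, hv2⟩ := Filter.nonempty_of_mem (Filter.inter_mem h1 h2)
    refine ⟨v, hv2.1, hv2.2.le, ?_⟩
    have := Metric.mem_closedBall.1 hv1
    rwa [Real.dist_0_eq_abs] at this
  · exact ⟨s, by linarith, le_rfl, by simp [h, hε.le]⟩

lemma isClosed_zeroSet {A : ℝ → ℝ} (hc : IsCadlagPath A) : IsClosed (zeroSet A) := by
  apply IsSeqClosed.isClosed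
  intro u p hu hup
  have hp0 : 0 ≤ p := ge_of_tendsto hup (Eventually.of_forall fun n => (hu n).1)
  have hlim : Tendsto (fun n : ℕ => 1 / ((n : ℝ) + 1)) atTop (𝓝 0) :=
    tendsto_one_div_add_atTop_nhds_zero_nat
  by_cases h1 : ∃ n, u n = p
  · obtain ⟨n, hn⟩ := h1; rw [← hn]; exact hu n
  push_neg at h1
  by_cases h2 : ∃ᶠ n in atTop, p < u n
  · -- approach from the right: A p = 0
    obtain ⟨φ, hφ, hφp⟩ := Filter.extraction_of_frequently_atTop h2
    set v : ℕ → ℝ := u ∘ φ with hv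
    have hvZ : ∀ n, v n ∈ zeroSet A := fun n => hu (φ n)
    have hvp : ∀ n, p < v n := hφp
    have hvt : Tendsto v atTop (𝓝 p) := hup.comp hφ.tendsto_atTop
    have hw : ∀ n : ℕ, ∃ w, v n - min (1 / ((n : ℝ) + 1)) (v n - p) < w ∧ w ≤ v n ∧
        |A w| ≤ 1 / ((n : ℝ) + 1) := by
      intro n
      refine zero_approx hc (lt_of_le_of_lt hp0 (hvp n)) (hvZ n).2 ?_ ?_
      · positivity
      · exact lt_min (by positivity) (by linarith [hvp n])
    choose w hw1 hw2 hw3 using hw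
    have hδt : Tendsto (fun n : ℕ => v n - min (1 / ((n : ℝ) + 1)) (v n - p)) atTop (𝓝 p) := by
      have : Tendsto (fun n : ℕ => min (1 / ((n : ℝ) + 1)) (v n - p)) atTop (𝓝 (min 0 0)) :=
        hlim.min (by simpa using hvt.sub_const p)
      simpa using hvt.sub this
    have hwt : Tendsto w atTop (𝓝 p) :=
      tendsto_of_tendsto_of_tendsto_of_le_of_le hδt hvt (fun n => (hw1 n).le) hw2
    have hwmem : ∀ n, w n ∈ Ici p := by
      intro n
      have : p ≤ v n - min (1 / ((n : ℝ) + 1)) (v n - p) := by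
        have := min_le_right (1 / ((n : ℝ) + 1)) (v n - p); linarith
      exact le_trans this (hw1 n).le
    have hwt' : Tendsto w atTop (𝓝[Ici p] p) :=
      tendsto_nhdsWithin_of_tendsto_nhds_of_eventually_within _ hwt
        (Eventually.of_forall hwmem)
    have hAp : Tendsto (fun n => A (w n)) atTop (𝓝 (A p)) := (hc.1 p hp0).tendsto.comp hwt'
    have hA0 : Tendsto (fun n => A (w n)) atTop (𝓝 0) :=
      squeeze_zero_norm (fun n => by simpa [Real.norm_eq_abs] using hw3 n) hlim
    exact ⟨hp0, Or.inr (tendsto_nhds_unique hAp hA0)⟩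
  · -- approach from the left: leftLim A p = 0
    have hev : ∀ᶠ n in atTop, u n ≤ p := by
      simpa using (Filter.not_frequently.1 h2)
    have hppos : 0 < p := by
      obtain ⟨n, hn⟩ := hev.exists
      exact lt_of_le_of_ne (le_trans (hu n).1 hn) (fun h => h1 n (by linarith [hn, (hu n).1]))
    have hgt : ∀ᶠ n in atTop, p / 2 < u n := hup (Ioi_mem_nhds (by linarith))
    have h3 : ∃ᶠ n in atTop, 0 < u n ∧ u n < p := by
      refine ((hgt.and hev).mono fun n hn => ⟨by linarith [hn.1], lt_of_le_of_ne hn.2 (h1 n)⟩).frequently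
    obtain ⟨φ, hφ, hφp⟩ := Filter.extraction_of_frequently_atTop h3
    set v : ℕ → ℝ := u ∘ φ with hv
    have hvZ : ∀ n, v n ∈ zeroSet A := fun n => hu (φ n)
    have hvt : Tendsto v atTop (𝓝 p) := hup.comp hφ.tendsto_atTop
    have hw : ∀ n : ℕ, ∃ w, v n - 1 / ((n : ℝ) + 1) < w ∧ w ≤ v n ∧
        |A w| ≤ 1 / ((n : ℝ) + 1) := by
      intro n
      exact zero_approx hc (hφp n).1 (hvZ n).2 (by positivity) (by positivity)
    choose w hw1 hw2 hw3 using hw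
    have hδt : Tendsto (fun n : ℕ => v n - 1 / ((n : ℝ) + 1)) atTop (𝓝 p) := by
      simpa using hvt.sub hlim
    have hwt : Tendsto w atTop (𝓝 p) :=
      tendsto_of_tendsto_of_tendsto_of_le_of_le hδt hvt (fun n => (hw1 n).le) hw2
    have hwmem : ∀ n, w n ∈ Iio p := fun n => lt_of_le_of_lt (hw2 n) (hφp n).2
    have hwt' : Tendsto w atTop (𝓝[<] p) :=
      tendsto_nhdsWithin_of_tendsto_nhds_of_eventually_within _ hwt
        (Eventually.of_forall hwmem)
    obtain ⟨l, hl⟩ := hc.2 p hppos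
    have hne : (𝓝[<] p).NeBot := inferInstance
    have hll : leftLim A p = l := leftLim_eq_of_tendsto hl
    have hAp : Tendsto (fun n => A (w n)) atTop (𝓝 l) := hl.comp hwt'
    have hA0 : Tendsto (fun n => A (w n)) atTop (𝓝 0) :=
      squeeze_zero_norm (fun n => by simpa [Real.norm_eq_abs] using hw3 n) hlim
    exact ⟨hp0, Or.inl (hll.trans (tendsto_nhds_unique hAp hA0))⟩


variable {A : ℝ → ℝ}

lemma bddAbove_zc (t : ℝ) : BddAbove (zeroSet A ∩ Iic t) :=
  ⟨t, fun _ hx => hx.2⟩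

lemma lastZero_nonneg (t : ℝ) : 0 ≤ lastZero A t :=
  Real.sSup_nonneg (fun _ hx => hx.1.1)

lemma lastZero_le {t : ℝ} (ht : 0 ≤ t) : lastZero A t ≤ t :=
  Real.sSup_le (fun _ hx => hx.2) ht

lemma le_lastZero {x t : ℝ} (hx : x ∈ zeroSet A) (hxt : x ≤ t) : x ≤ lastZero A t :=
  le_csSup (bddAbove_zc t) ⟨hx, hxt⟩

lemma monotone_lastZero : Monotone (lastZero A) := by
  intro s t hst
  rcases eq_empty_or_nonempty (zeroSet A ∩ Iic s) with h | h
  · rw [lastZero, h, Real.sSup_empty]; exact lastZero_nonneg t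
  · exact csSup_le_csSup (bddAbove_zc t) h (inter_subset_inter_right _ (Iic_subset_Iic.2 hst))

lemma isCompact_zc (hc : IsCadlagPath A) (t : ℝ) : IsCompact (zeroSet A ∩ Iic t) := by
  refine IsCompact.of_isClosed_subset (isCompact_Icc (a := (0:ℝ)) (b := t))
    ((isClosed_zeroSet hc).inter isClosed_Iic) ?_
  exact fun x hx => ⟨hx.1.1, hx.2⟩

lemma lastZero_mem (hc : IsCadlagPath A) {t : ℝ} (hne : (zeroSet A ∩ Iic t).Nonempty) :
    lastZero A t ∈ zeroSet A ∩ Iic t :=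
  (isCompact_zc hc t).sSup_mem hne

lemma lastZero_zero : lastZero A 0 = 0 := by
  rcases eq_empty_or_nonempty (zeroSet A ∩ Iic 0) with h | h
  · rw [lastZero, h, Real.sSup_empty]
  · refine le_antisymm (lastZero_le le_rfl) ?_
    obtain ⟨x, hx⟩ := h
    have hx0 : x = 0 := le_antisymm hx.2 hx.1.1
    rw [← hx0]; exact le_lastZero hx.1 le_rfl

/-- Right-continuity of the last-passage process. -/
lemma lastZero_continuousWithinAt (hc : IsCadlagPath A) {t : ℝ} (ht : 0 ≤ t) :
    ContinuousWithinAt (lastZero A) (Ici t) t := by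
  rw [← continuousWithinAt_Ioi_iff_Ici]
  rw [(monotone_lastZero (A := A)).continuousWithinAt_Ioi_iff_rightLim_eq]
  refine le_antisymm ?_ (monotone_lastZero.le_rightLim le_rfl)
  by_contra h
  push_neg at h
  -- for every u > t, the sup is attained strictly above t
  have key : ∀ u, t < u → lastZero A u ∈ zeroSet A ∧ t < lastZero A u ∧ lastZero A u ≤ u := by
    intro u hu
    have h1 : lastZero A t < lastZero A u :=
      lt_of_lt_of_le h (monotone_lastZero.rightLim_le hu)
    have hne : (zeroSet A ∩ Iic u).Nonempty := by
      by_contra hemp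
      rw [not_nonempty_iff_eq_empty] at hemp
      have h2 : lastZero A u = 0 := by rw [lastZero, hemp, Real.sSup_empty]
      rw [h2] at h1
      exact absurd h1 (not_lt.2 (lastZero_nonneg t))
    obtain ⟨hm, hmu⟩ := lastZero_mem hc hne
    refine ⟨hm, ?_, hmu⟩
    by_contra hle
    push_neg at hle
    exact absurd (le_lastZero hm hle) (not_le.2 h1)
  have hz : ∀ n : ℕ, lastZero A (t + 1 / ((n : ℝ) + 1)) ∈ zeroSet A ∧
      t < lastZero A (t + 1 / ((n : ℝ) + 1)) ∧
      lastZero A (t + 1 / ((n : ℝ) + 1)) ≤ t + 1 / ((n : ℝ) + 1) := by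
    intro n; exact key _ (lt_add_of_pos_right t (by positivity))
  have hlim : Tendsto (fun n : ℕ => 1 / ((n : ℝ) + 1)) atTop (𝓝 0) :=
    tendsto_one_div_add_atTop_nhds_zero_nat
  have hzt : Tendsto (fun n : ℕ => lastZero A (t + 1 / ((n : ℝ) + 1))) atTop (𝓝 t) := by
    refine tendsto_of_tendsto_of_tendsto_of_le_of_le tendsto_const_nhds
      (by simpa using (tendsto_const_nhds (x := t) (f := atTop (α := ℕ))).add hlim)
      (fun n => (hz n).2.1.le) (fun n => (hz n).2.2)
  have htZ : t ∈ zeroSet A :=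
    (isClosed_zeroSet hc).isSeqClosed (fun n => (hz n).1) hzt
  have htt : lastZero A t = t :=
    le_antisymm (lastZero_le ht) (le_lastZero htZ le_rfl)
  -- rightLim ≤ t
  have hrt : rightLim (lastZero A) t ≤ t := by
    have h1 : ∀ n : ℕ, rightLim (lastZero A) t ≤ t + 1 / ((n : ℝ) + 1) := by
      intro n
      exact le_trans (monotone_lastZero.rightLim_le (lt_add_of_pos_right t (by positivity))) (hz n).2.2
    exact ge_of_tendsto (by simpa using (tendsto_const_nhds (x := t) (f := atTop (α := ℕ))).add hlim)
      (Eventually.of_forall h1)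
  rw [htt] at h
  exact absurd hrt (not_le.2 h)

/-- Jump synchronization for the last-passage process. -/
lemma lastZero_sync (hc : IsCadlagPath A) {s : ℝ} (hs : 0 < s)
    (h : lastZero A s ≠ leftLim (lastZero A) s) : lastZero A s = s := by
  by_contra hne
  have hlt : lastZero A s < s := lt_of_le_of_ne (lastZero_le hs.le) hne
  have hconst : ∀ u, u ∈ Ioo (lastZero A s) s → lastZero A u = lastZero A s := by
    intro u hu
    refine le_antisymm (monotone_lastZero hu.2.le) ?_
    rcases eq_empty_or_nonempty (zeroSet A ∩ Iic s) with hemp | hne'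
    · rw [lastZero, hemp, Real.sSup_empty]; exact lastZero_nonneg u
    · exact le_lastZero (lastZero_mem hc hne').1 hu.1.le
  have : Tendsto (lastZero A) (𝓝[<] s) (𝓝 (lastZero A s)) := by
    refine Tendsto.congr' ?_ (tendsto_const_nhds)
    filter_upwards [Ioo_mem_nhdsLT hlt] with u hu
    exact (hconst u hu).symm
  have hne2 : (𝓝[<] s).NeBot := inferInstance
  exact h (leftLim_eq_of_tendsto this).symm


/-- The purely-discontinuous (sum of jumps) identity for the last-passage process. -/
lemma lastZero_tsum (hc : IsCadlagPath A) (hvol : volume (zeroSet A) = 0) {t : ℝ} (ht : 0 ≤ t) :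
    lastZero A t = ∑' s : Set.Ioc (0:ℝ) t, (lastZero A s - leftLim (lastZero A) s) := by
  set g := lastZero A with hg
  have hmono : Monotone g := monotone_lastZero
  set h : ℝ → ℝ := fun s => g s - leftLim g s with hh
  set D : Set ℝ := {s | s ∈ Ioc (0:ℝ) t ∧ leftLim g s ≠ g s} with hD
  have hjnn : ∀ s : ℝ, 0 ≤ h s := fun s => sub_nonneg.2 (hmono.leftLim_le le_rfl)
  have hllnn : ∀ s : ℝ, 0 < s → 0 ≤ leftLim g s :=
    fun s hs => le_trans (lastZero_nonneg 0) (hmono.le_leftLim hs)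
  have hDcount : D.Countable := by
    refine Set.Countable.mono ?_ hmono.countable_not_continuousAt
    intro s hs hcont
    have hne : (𝓝[<] s).NeBot := inferInstance
    exact hs.2 (leftLim_eq_of_tendsto (hcont.tendsto.mono_left nhdsWithin_le_nhds))
  have hdisj : D.PairwiseDisjoint (fun s => Ico (leftLim g s) (g s)) := by
    have key : ∀ a b : ℝ, a < b →
        Disjoint (Ico (leftLim g a) (g a)) (Ico (leftLim g b) (g b)) := by
      intro a b hab
      refine Set.disjoint_left.2 fun x hxa hxb => ?_
      exact absurd hxa.2 (not_lt.2 ((hmono.le_leftLim hab).trans hxb.1))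
    intro a ha b hb hab
    rcases lt_or_gt_of_ne hab with hlt | hlt
    · exact key a b hlt
    · exact (key b a hlt).symm
  set U : Set ℝ := ⋃ s ∈ D, Ico (leftLim g s) (g s) with hU
  have hUmeas : MeasurableSet U := MeasurableSet.biUnion hDcount (fun _ _ => measurableSet_Ico)
  have hUvol : volume U = ∑' s : D, ENNReal.ofReal (h s) := by
    rw [hU, measure_biUnion hDcount hdisj (fun s _ => measurableSet_Ico)]
    refine tsum_congr fun s => ?_
    rw [Real.volume_Ico]
  have hcov : Ioc 0 (g t) ⊆ zeroSet A ∪ U := by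
    intro x hx
    by_cases hxZ : x ∈ zeroSet A
    · exact Or.inl hxZ
    right
    have hne : (zeroSet A ∩ Iic t).Nonempty := by
      by_contra hemp
      rw [not_nonempty_iff_eq_empty] at hemp
      have : g t = 0 := by rw [hg, lastZero, hemp, Real.sSup_empty]
      rw [this] at hx
      exact absurd (lt_of_lt_of_le hx.1 hx.2) (lt_irrefl 0)
    have hgtZ := lastZero_mem hc hne
    set b := sInf (zeroSet A ∩ Ici x) with hb
    have hbne : (zeroSet A ∩ Ici x).Nonempty := ⟨g t, hgtZ.1, hx.2⟩
    have hbdd : BddBelow (zeroSet A ∩ Ici x) := ⟨x, fun y hy => hy.2⟩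
    have hbmem : b ∈ zeroSet A ∩ Ici x :=
      ((isClosed_zeroSet hc).inter isClosed_Ici).csInf_mem hbne hbdd
    have hxb : x < b := by
      rcases lt_or_eq_of_le (show x ≤ b from hbmem.2) with hlt | heq
      · exact hlt
      · exact absurd (heq ▸ hbmem.1) hxZ
    have hbgt : b ≤ g t := csInf_le hbdd ⟨hgtZ.1, hx.2⟩
    have hbt : b ≤ t := le_trans hbgt (lastZero_le ht)
    have hb0 : 0 < b := lt_trans hx.1 hxb
    have hgb : g b = b := le_antisymm (lastZero_le hb0.le) (le_lastZero hbmem.1 le_rfl)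
    have hub : ∀ u, u < b → g u ≤ x := by
      intro u hu
      rcases eq_empty_or_nonempty (zeroSet A ∩ Iic u) with hemp | hne'
      · have : g u = 0 := by rw [hg, lastZero, hemp, Real.sSup_empty]
        rw [this]; exact hx.1.le
      · refine Real.sSup_le ?_ hx.1.le
        intro z hz
        by_contra hzx
        push_neg at hzx
        have hbz : b ≤ z := csInf_le hbdd ⟨hz.1, hzx.le⟩
        have hzu : z ≤ u := hz.2
        linarith
    have hllb : leftLim g b ≤ x := by
      refine le_of_tendsto (hmono.tendsto_leftLim b) ?_
      filter_upwards [self_mem_nhdsWithin] with u hu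
      exact hub u hu
    have hbD : b ∈ D := by
      refine ⟨⟨hb0, hbt⟩, fun hcontra => ?_⟩
      rw [hgb] at hcontra
      exact absurd hxb (not_lt.2 (hcontra ▸ hllb))
    exact mem_biUnion hbD ⟨hllb, by rw [hgb]; exact hxb⟩
  have hUsub : U ⊆ Ico 0 (g t) := by
    refine iUnion₂_subset fun s hs => ?_
    exact Ico_subset_Ico (hllnn s hs.1.1) (hmono hs.1.2)
  have h1 : ENNReal.ofReal (g t) ≤ volume U := by
    have h2 : volume (Ioc (0:ℝ) (g t)) ≤ volume (zeroSet A) + volume U :=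
      le_trans (measure_mono hcov) (measure_union_le _ _)
    rwa [Real.volume_Ioc, hvol, zero_add, sub_zero] at h2
  have h2 : volume U ≤ ENNReal.ofReal (g t) := by
    have h2' : volume U ≤ volume (Ico 0 (g t)) := measure_mono hUsub
    rwa [Real.volume_Ico, sub_zero] at h2'
  have hUeq : volume U = ENNReal.ofReal (g t) := le_antisymm h2 h1
  have hfin : ∑' s : D, ENNReal.ofReal (h s) ≠ ⊤ := by
    rw [← hUvol, hUeq]; exact ENNReal.ofReal_ne_top
  have hsummable : Summable (fun s : D => h s) := by
    have hs := ENNReal.summable_toReal hfin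
    exact hs.congr fun s => ENNReal.toReal_ofReal (hjnn s)
  have hsumD : ∑' s : D, h (s : ℝ) = g t := by
    have h3 : ENNReal.ofReal (∑' s : D, h (s : ℝ)) = ENNReal.ofReal (g t) := by
      rw [ENNReal.ofReal_tsum_of_nonneg (f := fun s : D => h (s : ℝ)) (fun s => hjnn s)
        hsummable, ← hUvol, hUeq]
    exact (ENNReal.ofReal_eq_ofReal_iff
      (tsum_nonneg (fun s : D => hjnn (s : ℝ))) (lastZero_nonneg t)).1 h3
  have hind : ∑' s : Set.Ioc (0:ℝ) t, h (s : ℝ) = ∑' s : D, h (s : ℝ) := by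
    rw [tsum_subtype, tsum_subtype]
    refine tsum_congr fun x => ?_
    by_cases hxD : x ∈ D
    · rw [indicator_of_mem hxD.1, indicator_of_mem hxD]
    · by_cases hxI : x ∈ Ioc (0:ℝ) t
      · rw [indicator_of_mem hxI, indicator_of_notMem hxD]
        have : leftLim g x = g x := by
          by_contra hne
          exact hxD ⟨hxI, hne⟩
        simp [hh, this]
      · rw [indicator_of_notMem hxI, indicator_of_notMem hxD]
  rw [show (∑' s : Set.Ioc (0:ℝ) t, (lastZero A s - leftLim (lastZero A) s)) =
    ∑' s : Set.Ioc (0:ℝ) t, h (s : ℝ) from rfl, hind, hsumD]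


lemma isLazyClockPath_lastZero (hc : IsCadlagPath A) (hvol : volume (zeroSet A) = 0) :
    IsLazyClockPath (lastZero A) :=
  ⟨lastZero_zero,
   fun s t _ hst => monotone_lastZero hst,
   fun t ht => lastZero_continuousWithinAt hc ht,
   fun t ht => lastZero_tsum hc hvol ht,
   fun s hs hne => lastZero_sync hc hs hne⟩

lemma isLazyClockPath_congr {f h : ℝ → ℝ} (hmono : Monotone h) (hh : IsLazyClockPath h)
    (heq : ∀ t : ℝ, 0 ≤ t → f t = h t) : IsLazyClockPath f := by
  obtain ⟨h0, hmon2, hcont, htsum, hsync⟩ := hh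
  have hll : ∀ s : ℝ, 0 < s → leftLim f s = leftLim h s := by
    intro s hs
    have hne : (𝓝[<] s).NeBot := inferInstance
    refine leftLim_eq_of_tendsto ?_
    refine (hmono.tendsto_leftLim s).congr' ?_
    filter_upwards [Ioo_mem_nhdsLT hs] with x hx
    exact (heq x hx.1.le).symm
  refine ⟨(heq 0 le_rfl).trans h0, ?_, ?_, ?_, ?_⟩
  · intro s t hs hst; rw [heq s hs, heq t (hs.trans hst)]; exact hmon2 s t hs hst
  · intro t ht
    exact (hcont t ht).congr (fun x hx => heq x (le_trans ht hx)) (heq t ht)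
  · intro t ht
    rw [heq t ht, htsum t ht]
    refine tsum_congr fun s => ?_
    rw [heq s (le_of_lt s.2.1), hll s s.2.1]
  · intro s hs hnef
    rw [heq s hs.le] at hnef ⊢
    rw [hll s hs] at hnef
    exact hsync s hs hnef


section Forward

variable {f : ℝ → ℝ}

lemma M_mono (hf : IsLazyClockPath f) : Monotone (fun u => f (max u 0)) :=
  fun a b hab => hf.2.1 _ _ (le_max_right a 0) (max_le_max hab le_rfl)

lemma leftLim_eq_M (hf : IsLazyClockPath f) {s : ℝ} (hs : 0 < s) :
    leftLim f s = leftLim (fun u => f (max u 0)) s := by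
  have h1 := (M_mono hf).tendsto_leftLim s
  have hev : (fun u => f (max u 0)) =ᶠ[𝓝[<] s] f := by
    filter_upwards [Ioo_mem_nhdsLT hs] with x hx
    simp only [max_eq_left hx.1.le]
  have h2 : Tendsto f (𝓝[<] s) (𝓝 (leftLim (fun u => f (max u 0)) s)) := h1.congr' hev
  have hne : (𝓝[<] s).NeBot := inferInstance
  exact leftLim_eq_of_tendsto h2

lemma f_tendsto_leftLim (hf : IsLazyClockPath f) {s : ℝ} (hs : 0 < s) :
    Tendsto f (𝓝[<] s) (𝓝 (leftLim f s)) := by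
  rw [leftLim_eq_M hf hs]
  have h1 := (M_mono hf).tendsto_leftLim s
  have hev : (fun u => f (max u 0)) =ᶠ[𝓝[<] s] f := by
    filter_upwards [Ioo_mem_nhdsLT hs] with x hx
    simp only [max_eq_left hx.1.le]
  exact h1.congr' hev

lemma f_le_leftLim (hf : IsLazyClockPath f) {u s : ℝ} (hu : 0 ≤ u) (hus : u < s) :
    f u ≤ leftLim f s := by
  rw [leftLim_eq_M hf (lt_of_le_of_lt hu hus)]
  have h1 := (M_mono hf).le_leftLim hus
  simpa [max_eq_left hu] using h1

lemma leftLim_le_f (hf : IsLazyClockPath f) {s : ℝ} (hs : 0 < s) : leftLim f s ≤ f s := by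
  rw [leftLim_eq_M hf hs]
  have h1 := (M_mono hf).leftLim_le (le_refl s)
  simpa [max_eq_left hs.le] using h1

lemma leftLim_f_nonneg (hf : IsLazyClockPath f) {s : ℝ} (hs : 0 < s) : 0 ≤ leftLim f s := by
  have h1 := f_le_leftLim hf le_rfl hs
  rwa [hf.1] at h1

lemma leftLim_A (hf : IsLazyClockPath f) {s : ℝ} (hs : 0 < s) :
    leftLim (fun u => u - f u) s = s - leftLim f s := by
  have hne : (𝓝[<] s).NeBot := inferInstance
  exact leftLim_eq_of_tendsto
    (((continuous_id.tendsto s).mono_left nhdsWithin_le_nhds).sub (f_tendsto_leftLim hf hs))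

lemma cadlag_A (hf : IsLazyClockPath f) : IsCadlagPath (fun s => s - f s) :=
  ⟨fun t ht => continuousWithinAt_id.sub (hf.2.2.1 t ht),
   fun t ht => ⟨t - leftLim f t,
     ((continuous_id.tendsto t).mono_left nhdsWithin_le_nhds).sub (f_tendsto_leftLim hf ht)⟩⟩

lemma forward_key (hf : IsLazyClockPath f) {t : ℝ} (ht : 0 ≤ t) :
    (∀ z, z ∈ zeroSet (fun s => s - f s) → z ≤ t → z ≤ f t) ∧
    f t ∈ zeroSet (fun s => s - f s) ∧ f t ≤ t ∧
    volume (zeroSet (fun s => s - f s) ∩ Ioc 0 t) = 0 := by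
  have hf0 := hf.1
  have hfmono := hf.2.1
  have hfsum := hf.2.2.2.1
  have hfsync := hf.2.2.2.2
  set J : Set ℝ := {s | s ∈ Ioc (0:ℝ) t ∧ f s ≠ leftLim f s} with hJ
  have hJs : ∀ s ∈ J, f s = s := fun s hs => hfsync s hs.1.1 hs.2
  have hJcount : J.Countable := by
    refine Set.Countable.mono ?_ (M_mono hf).countable_not_continuousAt
    intro s hs hcont
    have hne : (𝓝[<] s).NeBot := inferInstance
    have h1 : leftLim (fun u => f (max u 0)) s = f (max s 0) :=
      leftLim_eq_of_tendsto (hcont.tendsto.mono_left nhdsWithin_le_nhds)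
    rw [max_eq_left hs.1.1.le] at h1
    exact hs.2 (((leftLim_eq_M hf hs.1.1).trans h1).symm)
  have hdisj : J.PairwiseDisjoint (fun s => Ioc (leftLim f s) s) := by
    have key : ∀ a ∈ J, ∀ b ∈ J, a < b →
        Disjoint (Ioc (leftLim f a) a) (Ioc (leftLim f b) b) := by
      intro a ha b hb hab
      refine Set.disjoint_left.2 fun x hxa hxb => ?_
      have h1 : a ≤ leftLim f b := by
        rw [← hJs a ha]; exact f_le_leftLim hf ha.1.1.le hab
      exact absurd hxb.1 (not_lt.2 (hxa.2.trans h1))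
    intro a ha b hb hab
    rcases lt_or_gt_of_ne hab with hlt | hlt
    · exact key a ha b hb hlt
    · exact (key b hb a ha hlt).symm
  have hdisj' : J.PairwiseDisjoint (fun s => Ioo (leftLim f s) s) := by
    intro a ha b hb hab
    exact Disjoint.mono Ioo_subset_Ioc_self Ioo_subset_Ioc_self (hdisj ha hb hab)
  set U : Set ℝ := ⋃ s ∈ J, Ioc (leftLim f s) s with hU
  set U' : Set ℝ := ⋃ s ∈ J, Ioo (leftLim f s) s with hU'
  have hUmeas : MeasurableSet U := MeasurableSet.biUnion hJcount (fun _ _ => measurableSet_Ioc)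
  have hU'meas : MeasurableSet U' := MeasurableSet.biUnion hJcount (fun _ _ => measurableSet_Ioo)
  set F : ℝ → ℝ := fun x => f x - leftLim f x with hF
  have hFs : ∀ s ∈ J, F s = s - leftLim f s := by
    intro s hs
    show f s - leftLim f s = s - leftLim f s
    rw [hJs s hs]
  have hUvol : volume U = ∑' s : J, ENNReal.ofReal (F (s:ℝ)) := by
    rw [hU, measure_biUnion hJcount hdisj (fun s _ => measurableSet_Ioc)]
    refine tsum_congr fun s => ?_
    rw [Real.volume_Ioc, hFs s s.2]
  have hU'vol : volume U' = volume U := by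
    rw [hU', measure_biUnion hJcount hdisj' (fun s _ => measurableSet_Ioo), hUvol]
    refine tsum_congr fun s => ?_
    rw [Real.volume_Ioo, hFs s s.2]
  have hUsub : U ⊆ Ioc 0 (f t) := by
    refine iUnion₂_subset fun s hs => ?_
    refine Ioc_subset_Ioc (leftLim_f_nonneg hf hs.1.1) ?_
    rw [← hJs s hs]; exact hfmono s t hs.1.1.le hs.1.2
  have hUfin : volume U ≠ ⊤ := by
    refine ne_top_of_le_ne_top ?_ (measure_mono hUsub)
    rw [Real.volume_Ioc]; exact ENNReal.ofReal_ne_top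
  have hFnn : ∀ s : ℝ, 0 < s → 0 ≤ F s := by
    intro s hs
    exact sub_nonneg.2 (leftLim_le_f hf hs)
  have hind : (∑' s : Set.Ioc (0:ℝ) t, F (s:ℝ)) = ∑' s : J, F (s:ℝ) := by
    rw [tsum_subtype, tsum_subtype]
    refine tsum_congr fun x => ?_
    by_cases hxJ : x ∈ J
    · rw [indicator_of_mem hxJ.1, indicator_of_mem hxJ]
    · by_cases hxI : x ∈ Ioc (0:ℝ) t
      · rw [indicator_of_mem hxI, indicator_of_notMem hxJ]
        have hfl : f x = leftLim f x := by
          by_contra hne; exact hxJ ⟨hxI, hne⟩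
        show F x = 0
        rw [show F x = f x - leftLim f x from rfl, hfl, sub_self]
      · rw [indicator_of_notMem hxI, indicator_of_notMem hxJ]
  have hsumJ : f t = ∑' s : J, F (s:ℝ) := (hfsum t ht).trans hind
  have hofReal : ENNReal.ofReal (f t) = volume U := by
    have hfin : (∑' s : J, ENNReal.ofReal (F (s:ℝ))) ≠ ⊤ := by
      rw [← hUvol]; exact hUfin
    have hsE : Summable (fun s : J => F (s:ℝ)) := by
      have hs := ENNReal.summable_toReal hfin
      exact hs.congr fun s => ENNReal.toReal_ofReal (hFnn s s.2.1.1)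
    rw [hsumJ, ENNReal.ofReal_tsum_of_nonneg (f := fun s : J => F (s:ℝ))
      (fun s => hFnn s s.2.1.1) hsE, ← hUvol]
  have hft0 : 0 ≤ f t := by rw [← hf0]; exact hfmono 0 t le_rfl ht
  have hftle : f t ≤ t := by
    have h2 : U ⊆ Ioc 0 t := by
      refine iUnion₂_subset fun s hs => ?_
      exact Ioc_subset_Ioc (leftLim_f_nonneg hf hs.1.1) hs.1.2
    have h1 : ENNReal.ofReal (f t) ≤ ENNReal.ofReal t := by
      rw [hofReal]
      calc volume U ≤ volume (Ioc (0:ℝ) t) := measure_mono h2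
        _ = ENNReal.ofReal t := by rw [Real.volume_Ioc, sub_zero]
    exact (ENNReal.ofReal_le_ofReal_iff ht).1 h1
  have hdiff : volume (Ioc 0 (f t) \ U') = 0 := by
    have hU'sub : U' ⊆ Ioc 0 (f t) :=
      subset_trans (iUnion₂_mono fun s _ => Ioo_subset_Ioc_self) hUsub
    rw [measure_diff hU'sub hU'meas.nullMeasurableSet (by rw [hU'vol]; exact hUfin),
      hU'vol, ← hofReal, Real.volume_Ioc, sub_zero, tsub_self]
  have hub : ∀ z, z ∈ zeroSet (fun s => s - f s) → z ≤ t → z ≤ f t := by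
    intro z hz hzt
    rcases eq_or_lt_of_le hz.1 with hz0 | hz0
    · rw [← hz0]; exact hft0
    rcases hz.2 with hl | hr
    · rw [leftLim_A hf hz0] at hl
      have h1 : leftLim f z = z := by linarith
      calc z = leftLim f z := h1.symm
        _ ≤ f z := leftLim_le_f hf hz0
        _ ≤ f t := hfmono z t hz0.le hzt
    · have hr' : z - f z = 0 := hr
      have h1 : f z = z := by linarith
      rw [← h1]; exact hfmono z t hz0.le hzt
  refine ⟨hub, ?_, hftle, ?_⟩
  · rcases eq_or_lt_of_le hft0 with hS0 | hSpos
    · refine ⟨hft0, Or.inr ?_⟩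
      show f t - f (f t) = 0
      rw [← hS0, hf0, sub_zero]
    · by_cases hmem : f t ∈ J
      · refine ⟨hft0, Or.inr ?_⟩
        show f t - f (f t) = 0
        rw [hJs _ hmem, sub_self]
      · have hcc : ∀ c, c < f t → ∃ s ∈ J, c < s := by
          intro c hc
          by_contra hno
          push_neg at hno
          set c' := max c 0 with hc'
          have hc'lt : c' < f t := max_lt hc hSpos
          have hUsub2 : U ⊆ Ioc 0 c' := by
            refine iUnion₂_subset fun s hs => ?_
            exact Ioc_subset_Ioc (leftLim_f_nonneg hf hs.1.1)
              ((hno s hs).trans (le_max_left _ _))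
          have h3 : ENNReal.ofReal (f t) ≤ ENNReal.ofReal c' := by
            rw [hofReal]
            calc volume U ≤ volume (Ioc (0:ℝ) c') := measure_mono hUsub2
              _ = ENNReal.ofReal c' := by rw [Real.volume_Ioc, sub_zero]
          have h4 := (ENNReal.ofReal_le_ofReal_iff (le_max_right c 0)).1 h3
          linarith
        have hgell : f t ≤ leftLim f (f t) := by
          refine le_of_forall_lt fun c hc => ?_
          obtain ⟨s, hsJ, hcs⟩ := hcc (max c (f t / 2)) (max_lt hc (by linarith))
          have hsle : s ≤ f t := by
            rw [← hJs s hsJ]; exact hfmono s t hsJ.1.1.le hsJ.1.2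
          have hslt : s < f t := lt_of_le_of_ne hsle (fun h => hmem (h ▸ hsJ))
          have h1 : f s ≤ leftLim f (f t) := f_le_leftLim hf hsJ.1.1.le hslt
          rw [hJs s hsJ] at h1
          calc c ≤ max c (f t / 2) := le_max_left _ _
            _ < s := hcs
            _ ≤ leftLim f (f t) := h1
        have hlel : leftLim f (f t) ≤ f t :=
          le_trans (leftLim_le_f hf hSpos) (hfmono (f t) t hft0 hftle)
        refine ⟨hft0, Or.inl ?_⟩
        rw [leftLim_A hf hSpos, le_antisymm hlel hgell, sub_self]
  · refine measure_mono_null ?_ hdiff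
    intro z hz
    have hzZ := hz.1
    have hz0 : (0:ℝ) < z := hz.2.1
    have hzt : z ≤ t := hz.2.2
    constructor
    · exact ⟨hz0, hub z hzZ hzt⟩
    · intro hzU
      obtain ⟨s, hsJ, hzs⟩ := mem_iUnion₂.1 hzU
      have h2 : f z ≤ leftLim f s := f_le_leftLim hf hz0.le hzs.2
      have h4 : leftLim f s < z := hzs.1
      rcases hzZ.2 with hl | hr
      · rw [leftLim_A hf hz0] at hl
        have h1 : leftLim f z = z := by linarith
        have h3 : leftLim f z ≤ f z := leftLim_le_f hf hz0
        linarith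
      · have hr' : z - f z = 0 := hr
        linarith

lemma forward_lastZero (hf : IsLazyClockPath f) {t : ℝ} (ht : 0 ≤ t) :
    f t = lastZero (fun s => s - f s) t := by
  obtain ⟨hub, hmem, hle, -⟩ := forward_key hf ht
  refine le_antisymm (le_lastZero hmem hle) (Real.sSup_le ?_ ?_)
  · intro z hz; exact hub z hz.1 hz.2
  · rw [← hf.1]; exact hf.2.1 0 t le_rfl ht

lemma forward_vol (hf : IsLazyClockPath f) : volume (zeroSet (fun s => s - f s)) = 0 := by
  have hsub : zeroSet (fun s => s - f s) ⊆
      {0} ∪ ⋃ n : ℕ, (zeroSet (fun s => s - f s) ∩ Ioc 0 (n:ℝ)) := by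
    intro z hz
    rcases eq_or_lt_of_le hz.1 with h0 | h0
    · exact Or.inl (by rw [← h0]; exact rfl)
    · obtain ⟨n, hn⟩ := exists_nat_ge z
      exact Or.inr (mem_iUnion.2 ⟨n, hz, h0, hn⟩)
  refine measure_mono_null hsub ?_
  exact measure_union_null (measure_singleton 0)
    (measure_iUnion_null fun n => (forward_key hf (Nat.cast_nonneg n)).2.2.2)

end Forward

lemma setEq (A : ℝ → ℝ) (t : ℝ) :
    {s : ℝ | 0 ≤ s ∧ s ≤ t ∧ (leftLim A s = 0 ∨ A s = 0)} = zeroSet A ∩ Iic t := by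
  ext x
  constructor
  · rintro ⟨h1, h2, h3⟩; exact ⟨⟨h1, h3⟩, h2⟩
  · rintro ⟨⟨h1, h3⟩, h2⟩; exact ⟨h1, h2, h3⟩

end LazyAux


open LazyAux in
/-- A process `θ` is a lazy clock if and only if there is a càdlàg process `A` whose zero set
`𝒵 = {s : A_{s⁻} = 0 or A_s = 0}` has a.s. zero Lebesgue measure, such that `θ_t` is the last
point of `𝒵` before `t`. -/
theorem isLazyClock_iff_lastPassage
    {Ω : Type*} [MeasurableSpace Ω] (μ : Measure Ω) [IsProbabilityMeasure μ]
    (θ : ℝ → Ω → ℝ) (hθmeas : ∀ t, Measurable (θ t)) :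
    IsLazyClock μ θ ↔
      ∃ A : ℝ → Ω → ℝ, (∀ t, Measurable (A t)) ∧
        ∀ᵐ ω ∂μ,
          IsCadlagPath (fun t => A t ω) ∧
          volume {s : ℝ | 0 ≤ s ∧
            (Function.leftLim (fun u => A u ω) s = 0 ∨ A s ω = 0)} = 0 ∧
          ∀ t : ℝ, 0 ≤ t →
            θ t ω = sSup {s : ℝ | 0 ≤ s ∧ s ≤ t ∧
              (Function.leftLim (fun u => A u ω) s = 0 ∨ A s ω = 0)} := by
  constructor
  · rintro ⟨hmeas, hae⟩
    refine ⟨fun t ω => t - θ t ω, fun t => measurable_const.sub (hθmeas t), ?_⟩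
    filter_upwards [hae] with ω hω
    refine ⟨cadlag_A hω, ?_, ?_⟩
    · exact forward_vol hω
    · intro t ht
      have h1 := forward_lastZero hω ht
      rw [show {s : ℝ | 0 ≤ s ∧ s ≤ t ∧
          (Function.leftLim (fun u => u - θ u ω) s = 0 ∨ s - θ s ω = 0)} =
        zeroSet (fun s => s - θ s ω) ∩ Iic t from setEq _ t]
      exact h1
  · rintro ⟨A, hAmeas, hae⟩
    refine ⟨hθmeas, ?_⟩
    filter_upwards [hae] with ω hω
    obtain ⟨hcad, hvol, hsup⟩ := hω
    have hvol' : volume (zeroSet (fun u => A u ω)) = 0 := hvol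
    have hpath := isLazyClockPath_lastZero hcad hvol'
    refine isLazyClockPath_congr monotone_lastZero hpath ?_
    intro t ht
    rw [hsup t ht, show {s : ℝ | 0 ≤ s ∧ s ≤ t ∧
        (Function.leftLim (fun u => A u ω) s = 0 ∨ A s ω = 0)} =
      zeroSet (fun u => A u ω) ∩ Iic t from setEq _ t]
    rfl
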